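/- arXiv:1810.00865 — 4 statements merged into one kernel-verified Lean document; each statement's English description precedes it below -/
import Mathlib

section
/- Let T ≥ 2, b > 0, and H_b = -b|1⟩⟨1| + L where L is the path-graph Laplacian on ℂ^T. Then the minimum eigenvalue of H_b satisfies λ_min(H_b) < -b²/(b+1). -/
/-- The path-graph Laplacian on `ℂ^T`: `∑_{t=1}^{T-1} (|t⟩-|t+1⟩)(⟨t|-⟨t+1|)`,
with sites indexed by `Fin T` (site `t` of the paper is index `t-1`). -/
noncomputable def pathLap (T : ℕ) : Matrix (Fin T) (Fin T) ℂ :=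
  ∑ t ∈ Finset.range (T - 1),
    Matrix.vecMulVec
      (fun i : Fin T => (if (i : ℕ) = t then (1:ℂ) else 0) - (if (i : ℕ) = t + 1 then 1 else 0))
      (fun i : Fin T => (if (i : ℕ) = t then (1:ℂ) else 0) - (if (i : ℕ) = t + 1 then 1 else 0))

/-- `H_b = -b|1⟩⟨1| + pathLap` on `ℂ^T`. -/
noncomputable def Hb (T : ℕ) (b : ℝ) : Matrix (Fin T) (Fin T) ℂ :=
  pathLap T - (b : ℂ) •
    Matrix.vecMulVec (fun i : Fin T => if (i : ℕ) = 0 then (1:ℂ) else 0)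
      (fun i : Fin T => if (i : ℕ) = 0 then (1:ℂ) else 0)

/- ### Auxiliary lemmas -/

theorem quad_vecMulVec {n : ℕ} (w v x : Fin n → ℂ) :
    dotProduct (star x) ((Matrix.vecMulVec w v).mulVec x)
      = (dotProduct (star x) w) * (dotProduct v x) := by
  simp only [dotProduct, Matrix.mulVec, Matrix.vecMulVec_apply, Finset.sum_mul]
  refine Finset.sum_congr rfl fun i _ => ?_
  rw [Finset.mul_sum, Finset.mul_sum]
  exact Finset.sum_congr rfl fun j _ => by ring

theorem sum_mulVec' {n : ℕ} {s : Finset ℕ} (M : ℕ → Matrix (Fin n) (Fin n) ℂ) (x : Fin n → ℂ) :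
    (∑ t ∈ s, M t).mulVec x = ∑ t ∈ s, (M t).mulVec x := by
  funext i
  simp only [Matrix.mulVec, dotProduct, Matrix.sum_apply, Finset.sum_apply,
    Finset.sum_mul]
  exact Finset.sum_comm

theorem dot_sum {n : ℕ} {s : Finset ℕ} (w : Fin n → ℂ) (f : ℕ → Fin n → ℂ) :
    dotProduct w (∑ t ∈ s, f t) = ∑ t ∈ s, dotProduct w (f t) := by
  simp only [dotProduct, Finset.sum_apply, Finset.mul_sum]
  exact Finset.sum_comm

theorem dot_ite {n : ℕ} (g : Fin n → ℂ) (t : ℕ) (ht : t < n) :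
    dotProduct (fun i : Fin n => if (i : ℕ) = t then (1:ℂ) else 0) g = g ⟨t, ht⟩ := by
  show (∑ i : Fin n, (if (i : ℕ) = t then (1:ℂ) else 0) * g i) = g ⟨t, ht⟩
  rw [Fintype.sum_eq_single (⟨t, ht⟩ : Fin n)]
  · simp
  · intro i hi
    rw [if_neg, zero_mul]
    exact fun h => hi (Fin.ext h)

theorem herm_shift {n : ℕ} {A : Matrix (Fin n) (Fin n) ℂ} (hA : A.IsHermitian)
    (u y : Fin n → ℂ) :
    dotProduct (star u) (A.mulVec y) = dotProduct (star (A.mulVec u)) y := by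
  rw [Matrix.star_mulVec, ← Matrix.dotProduct_mulVec, hA.eq]

/-- Variational principle: if the Rayleigh quotient of some vector is below `B`,
then some eigenvalue is below `B`. -/
theorem exists_eigenvalue_lt {n : ℕ} (A : Matrix (Fin n) (Fin n) ℂ)
    (hA : A.IsHermitian) (x : Fin n → ℂ) (B : ℝ)
    (h : (dotProduct (star x) (A.mulVec x)).re < B * ∑ i, ‖x i‖ ^ 2) :
    ∃ j, hA.eigenvalues j < B := by
  by_contra hc
  push_neg at hc
  set e := hA.eigenvectorBasis with he
  set v : EuclideanSpace ℂ (Fin n) := (WithLp.equiv 2 _).symm x with hv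
  set c : Fin n → ℂ := fun j => e.repr v j with hc'
  have hnorm : ∑ i, ‖x i‖ ^ 2 = ∑ j, ‖c j‖ ^ 2 := by
    have h1 : ‖v‖ ^ 2 = ∑ i, ‖x i‖ ^ 2 := by
      rw [EuclideanSpace.norm_eq, Real.sq_sqrt (by positivity)]
      rfl
    have h2 : ‖e.repr v‖ ^ 2 = ∑ j, ‖c j‖ ^ 2 := by
      rw [EuclideanSpace.norm_eq, Real.sq_sqrt (by positivity)]
    rw [← h1, ← e.repr.norm_map v, h2]
  have hw : ∀ j, e.repr ((WithLp.equiv 2 (Fin n → ℂ)).symm (A.mulVec x)) j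
      = (hA.eigenvalues j : ℂ) * c j := by
    intro j
    rw [e.repr_apply_apply]
    have h1 : (inner ℂ (e j) ((WithLp.equiv 2 (Fin n → ℂ)).symm (A.mulVec x)) : ℂ)
        = dotProduct (star (⇑(e j) : Fin n → ℂ)) (A.mulVec x) := by
      rw [EuclideanSpace.inner_eq_star_dotProduct, dotProduct_comm]; rfl
    rw [h1, herm_shift hA, hA.mulVec_eigenvectorBasis j]
    have h2 : star (hA.eigenvalues j • (⇑(e j) : Fin n → ℂ))
        = (hA.eigenvalues j : ℂ) • star (⇑(e j) : Fin n → ℂ) := by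
      rw [star_smul]
      norm_cast
    rw [h2, smul_dotProduct]
    have h3 : dotProduct (star (⇑(e j) : Fin n → ℂ)) x
        = (inner ℂ (e j) v : ℂ) := by
      rw [EuclideanSpace.inner_eq_star_dotProduct, dotProduct_comm]; rfl
    rw [h3, ← e.repr_apply_apply v j]
    rfl
  have hquad : (dotProduct (star x) (A.mulVec x)).re
      = ∑ j, hA.eigenvalues j * ‖c j‖ ^ 2 := by
    have h0 : dotProduct (star x) (A.mulVec x)
        = (inner ℂ v ((WithLp.equiv 2 (Fin n → ℂ)).symm (A.mulVec x)) : ℂ) := by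
      rw [EuclideanSpace.inner_eq_star_dotProduct, dotProduct_comm]; rfl
    rw [h0, ← e.repr.inner_map_map]
    rw [EuclideanSpace.inner_eq_star_dotProduct]
    simp only [dotProduct, Pi.star_apply]
    rw [Complex.re_sum]
    refine Finset.sum_congr rfl fun j _ => ?_
    have h5 : (WithLp.equiv 2 _) (e.repr ((WithLp.equiv 2 (Fin n → ℂ)).symm (A.mulVec x))) j
        = (hA.eigenvalues j : ℂ) * c j := hw j
    rw [hw j]
    have hcc : (WithLp.equiv 2 _) (e.repr v) j = c j := rfl
    change ((hA.eigenvalues j : ℂ) * c j * star (c j)).re = _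
    rw [mul_comm]
    have h6 : star (c j) * ((hA.eigenvalues j : ℂ) * c j)
        = ((hA.eigenvalues j * ‖c j‖ ^ 2 : ℝ) : ℂ) := by
      rw [Complex.star_def,
        show (starRingEnd ℂ) (c j) * ((hA.eigenvalues j : ℂ) * c j)
          = (hA.eigenvalues j : ℂ) * (c j * (starRingEnd ℂ) (c j)) from by ring,
        RCLike.mul_conj]
      simp
    rw [h6, Complex.ofReal_re]
  rw [hquad, hnorm, Finset.mul_sum] at h
  have : ∑ j, B * ‖c j‖ ^ 2 ≤ ∑ j, hA.eigenvalues j * ‖c j‖ ^ 2 :=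
    Finset.sum_le_sum fun j _ => mul_le_mul_of_nonneg_right (hc j) (by positivity)
  linarith

/-- The key real inequality for the ansatz `ψ_t = (b+1)^{-t}`. -/
theorem key_ineq (n : ℕ) (b : ℝ) (hb : 0 < b) :
    (∑ t ∈ Finset.range n, ((b+1)⁻¹^(t+1) - (b+1)⁻¹^(t+2))^2) - b * ((b+1)⁻¹^(0+1))^2
      < -(b^2/(b+1)) * ∑ t ∈ Finset.range (n+1), ((b+1)⁻¹^(t+1))^2 := by
  set r : ℝ := (b+1)⁻¹ with hrdef
  have hb1 : (0:ℝ) < b + 1 := by linarith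
  have hb1' : (b:ℝ) + 1 ≠ 0 := ne_of_gt hb1
  have hr : 0 < r := by positivity
  have hbr : b * r < 1 := by
    have h := (div_lt_one hb1).mpr (by linarith : b < b + 1)
    rwa [div_eq_mul_inv] at h
  have hB : b^2/(b+1) = b^2 * r := by rw [div_eq_mul_inv]
  have hid : (1-r)^2 + b^2*r = b*(1-r^2) := by
    rw [hrdef]
    field_simp
    ring
  have hterm : ∀ t : ℕ, (r^(t+1) - r^(t+2))^2 + b^2*r*(r^(t+1))^2
      = b*r^(2*t+2) - b*r^(2*(t+1)+2) := by
    intro t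
    have e1 : (r^(t+1) - r^(t+2))^2 + b^2*r*(r^(t+1))^2
        = (r^(t+1))^2 * ((1-r)^2 + b^2*r) := by ring
    have e2 : b*r^(2*t+2) - b*r^(2*(t+1)+2) = (r^(t+1))^2 * (b*(1-r^2)) := by ring
    rw [e1, e2, hid]
  have hsum : (∑ t ∈ Finset.range n, (r^(t+1) - r^(t+2))^2)
      + b^2*r * (∑ t ∈ Finset.range n, (r^(t+1))^2)
      = b*r^(2*0+2) - b*r^(2*n+2) := by
    rw [Finset.mul_sum, ← Finset.sum_add_distrib]
    rw [Finset.sum_congr rfl fun t _ => hterm t]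
    exact Finset.sum_range_sub' (fun t => b*r^(2*t+2)) n
  rw [Finset.sum_range_succ, hB]
  have hX : (r^(n+1))^2 = r^(2*n+2) := by ring
  rw [hX]
  have hfin : b^2*r*r^(2*n+2) < b*r^(2*n+2) := by
    have hp : (0:ℝ) < r^(2*n+2) := pow_pos hr _
    nlinarith [hp, mul_pos (show (0:ℝ) < 1 - b*r by linarith) (mul_pos hb hp)]
  nlinarith [hsum, hfin, show b*(r^(0+1))^2 = b*r^(2*0+2) from by ring]

/-- The minimum eigenvalue of `H_b` satisfies `λ_min < -b²/(b+1)`: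
there is an eigenvalue below `-b²/(b+1)` (and it is the least one). -/
theorem stmt1 (T : ℕ) (hT : 2 ≤ T) (b : ℝ) (hb : 0 < b)
    (hH : (Hb T b).IsHermitian) :
    ∃ i : Fin T, hH.eigenvalues i < -(b ^ 2 / (b + 1)) ∧
      ∀ j : Fin T, hH.eigenvalues i ≤ hH.eigenvalues j := by
  have hT0 : 0 < T := by omega
  set ψ : Fin T → ℂ := fun i => (((b+1)⁻¹ ^ ((i:ℕ)+1) : ℝ) : ℂ) with hψ
  have hstar : star ψ = ψ := funext fun i => Complex.conj_ofReal _
  have hv : ∀ t, t < T - 1 →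
      dotProduct
        (fun i : Fin T => (if (i:ℕ) = t then (1:ℂ) else 0) - (if (i:ℕ) = t+1 then 1 else 0)) ψ
        = (((b+1)⁻¹^(t+1) - (b+1)⁻¹^(t+2) : ℝ) : ℂ) := by
    intro t ht
    have h1 : t < T := by omega
    have h2 : t + 1 < T := by omega
    have e1 : dotProduct
        (fun i : Fin T => (if (i:ℕ) = t then (1:ℂ) else 0) - (if (i:ℕ) = t+1 then 1 else 0)) ψ
        = dotProduct (fun i : Fin T => if (i:ℕ) = t then (1:ℂ) else 0) ψ
          - dotProduct (fun i : Fin T => if (i:ℕ) = t+1 then (1:ℂ) else 0) ψ := by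
      simp only [dotProduct, sub_mul, Finset.sum_sub_distrib]
    rw [e1, dot_ite ψ t h1, dot_ite ψ (t+1) h2]
    simp only [hψ]
    push_cast
    ring_nf
  have hu : dotProduct (fun i : Fin T => if (i:ℕ) = 0 then (1:ℂ) else 0) ψ
      = (((b+1)⁻¹^(0+1) : ℝ) : ℂ) := by
    rw [dot_ite ψ 0 hT0]
  have hpath : dotProduct (star ψ) ((pathLap T).mulVec ψ)
      = ∑ t ∈ Finset.range (T-1), ((((b+1)⁻¹^(t+1) - (b+1)⁻¹^(t+2) : ℝ)) : ℂ)^2 := by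
    rw [pathLap, sum_mulVec', dot_sum]
    refine Finset.sum_congr rfl fun t ht => ?_
    have ht' : t < T - 1 := Finset.mem_range.mp ht
    rw [quad_vecMulVec, hv t ht', hstar, dotProduct_comm, hv t ht']
    ring
  have hQ : dotProduct (star ψ) ((Hb T b).mulVec ψ)
      = ((((∑ t ∈ Finset.range (T-1), ((b+1)⁻¹^(t+1) - (b+1)⁻¹^(t+2))^2)
          - b * ((b+1)⁻¹^(0+1))^2 : ℝ)) : ℂ) := by
    rw [Hb, Matrix.sub_mulVec, dotProduct_sub, hpath, Matrix.smul_mulVec,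
      dotProduct_smul, quad_vecMulVec, hu, hstar, dotProduct_comm, hu]
    push_cast [smul_eq_mul]
    ring
  have hN : ∑ i : Fin T, ‖ψ i‖^2 = ∑ t ∈ Finset.range T, ((b+1)⁻¹^(t+1))^2 := by
    rw [← Fin.sum_univ_eq_sum_range (fun t => ((b+1)⁻¹^(t+1))^2) T]
    refine Finset.sum_congr rfl fun i _ => ?_
    simp only [hψ, Complex.norm_real, Real.norm_eq_abs, sq_abs]
  have hlt : (dotProduct (star ψ) ((Hb T b).mulVec ψ)).re
      < (-(b^2/(b+1))) * ∑ i, ‖ψ i‖^2 := by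
    rw [hQ, Complex.ofReal_re, hN]
    have h := key_ineq (T-1) b hb
    rwa [show T - 1 + 1 = T from by omega] at h
  obtain ⟨j, hj⟩ := exists_eigenvalue_lt _ hH ψ _ hlt
  obtain ⟨i, -, hi⟩ := Finset.exists_min_image Finset.univ hH.eigenvalues
    ⟨j, Finset.mem_univ j⟩
  exact ⟨i, lt_of_le_of_lt (hi j (Finset.mem_univ j)) hj, fun k => hi k (Finset.mem_univ k)⟩
end

section
/- Let T ≥ 2, b > 0, and define |Ψ⟩ = A Σ_{t=1}^T (b+1)^{-t}|t⟩ on ℂ^T with A² = b(2+b)/(1-(b+1)^{-2T}). With H_b = -b|1⟩⟨1| + L (L the path Laplacian), we have H_b|Ψ⟩ = -(b²/(b+1))|Ψ⟩ - (Ab/(b+1)^{T+1})|T⟩. -/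
/-- The geometric ansatz `|Ψ⟩ = A ∑_{t=1}^T (b+1)^{-t} |t⟩` (site `t` is index `t-1`). -/
noncomputable def ansatzA (T : ℕ) (b A : ℝ) : Fin T → ℂ :=
  fun t => (A : ℂ) * (((b + 1 : ℝ) : ℂ))⁻¹ ^ ((t : ℕ) + 1)

lemma lap_apply (T : ℕ) (v : ℕ → ℂ) (i : Fin T) :
    (pathLap T).mulVec (fun j : Fin T => v (j : ℕ)) i
    = ∑ t ∈ Finset.range (T-1),
      ((if (i:ℕ) = t then (1:ℂ) else 0) - (if (i:ℕ) = t+1 then 1 else 0)) * (v t - v (t+1)) := by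
  simp only [Matrix.mulVec, dotProduct, pathLap, Matrix.sum_apply,
    Matrix.vecMulVec_apply, Finset.sum_mul]
  rw [Finset.sum_comm]
  refine Finset.sum_congr rfl fun t ht => ?_
  have ht' : t + 1 < T := by
    have := Finset.mem_range.mp ht; omega
  have h1 : (∑ j : Fin T, ((if (j:ℕ) = t then (1:ℂ) else 0) - if (j:ℕ) = t+1 then 1 else 0) * v (j:ℕ))
      = v t - v (t+1) := by
    rw [Fin.sum_univ_eq_sum_range (fun n => ((if n = t then (1:ℂ) else 0) - if n = t+1 then 1 else 0) * v n)]
    simp only [sub_mul, ite_mul, one_mul, zero_mul, Finset.sum_sub_distrib]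
    rw [Finset.sum_ite_eq' (Finset.range T) t v, Finset.sum_ite_eq' (Finset.range T) (t+1) v]
    simp [Finset.mem_range.mpr (by omega : t < T), Finset.mem_range.mpr ht']
  calc ∑ j : Fin T, ((if (i:ℕ) = t then (1:ℂ) else 0) - if (i:ℕ) = t+1 then 1 else 0) *
          ((if (j:ℕ) = t then (1:ℂ) else 0) - if (j:ℕ) = t+1 then 1 else 0) * v (j:ℕ)
      = ((if (i:ℕ) = t then (1:ℂ) else 0) - if (i:ℕ) = t+1 then 1 else 0) *
        ∑ j : Fin T, ((if (j:ℕ) = t then (1:ℂ) else 0) - if (j:ℕ) = t+1 then 1 else 0) * v (j:ℕ) := by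
        rw [Finset.mul_sum]; simp [mul_assoc]
    _ = _ := by rw [h1]

lemma sum_eval (N k : ℕ) (d : ℕ → ℂ) :
    ∑ t ∈ Finset.range N, ((if k = t then (1:ℂ) else 0) - if k = t+1 then 1 else 0) * d t
    = (if k < N then d k else 0) - (if 0 < k ∧ k ≤ N then d (k-1) else 0) := by
  simp only [sub_mul, ite_mul, one_mul, zero_mul, Finset.sum_sub_distrib]
  congr 1
  · rw [Finset.sum_ite_eq (Finset.range N) k d]; simp [Finset.mem_range]
  · rcases k with _ | m
    · simp
    · simp only [Nat.succ_eq_add_one, add_left_inj]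
      rw [Finset.sum_ite_eq (Finset.range N) m d]
      by_cases h : m < N
      · simp [Finset.mem_range, h, show m+1 ≤ N by omega]
      · simp [Finset.mem_range, h, show ¬(m+1 ≤ N) by omega]


/-- `H_b |Ψ⟩ = -(b²/(b+1)) |Ψ⟩ - (A b/(b+1)^{T+1}) |T⟩`. -/
theorem stmt2 (T : ℕ) (hT : 2 ≤ T) (b : ℝ) (hb : 0 < b) (A : ℝ)
    (hA : A ^ 2 = b * (2 + b) / (1 - ((b + 1 : ℝ) ^ (2 * T))⁻¹)) :
    (Hb T b).mulVec (ansatzA T b A)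
      = ((-(b ^ 2 / (b + 1)) : ℝ) : ℂ) • ansatzA T b A
        - ((A * b / (b + 1) ^ (T + 1) : ℝ) : ℂ) •
            (Pi.single (⟨T - 1, by omega⟩ : Fin T) (1 : ℂ) : Fin T → ℂ) := by
  have hβ : ((b : ℂ) + 1) ≠ 0 := by
    intro h
    have : (b : ℝ) + 1 = 0 := by exact_mod_cast h
    linarith
  set u : ℂ := (b : ℂ) + 1 with hu
  set f : ℕ → ℂ := fun n => (A : ℂ) * u⁻¹ ^ (n + 1) with hf
  have hψ : ansatzA T b A = fun j : Fin T => f (j : ℕ) := by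
    funext j; simp only [ansatzA, hf]; push_cast; rfl
  funext i
  have h2 : (((b:ℂ) • Matrix.vecMulVec (fun i : Fin T => if (i:ℕ)=0 then (1:ℂ) else 0)
        (fun i : Fin T => if (i:ℕ)=0 then (1:ℂ) else 0)).mulVec (fun j : Fin T => f (j:ℕ))) i
      = (b:ℂ) * ((if (i:ℕ) = 0 then (1:ℂ) else 0) * f 0) := by
    simp only [Matrix.mulVec, dotProduct, Matrix.smul_apply,
      Matrix.vecMulVec_apply, smul_eq_mul, mul_assoc, ← Finset.mul_sum]
    congr 1
    congr 1
    rw [Fin.sum_univ_eq_sum_range (fun n => (if n = 0 then (1:ℂ) else 0) * f n)]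
    simp only [ite_mul, one_mul, zero_mul]
    rw [Finset.sum_ite_eq' (Finset.range T) 0 f]
    simp [Finset.mem_range, show 0 < T by omega]
  have hsub : (Hb T b).mulVec (ansatzA T b A) i
      = (pathLap T).mulVec (fun j : Fin T => f (j : ℕ)) i
        - (b : ℂ) * ((if (i:ℕ) = 0 then (1:ℂ) else 0) * f 0) := by
    rw [Hb, Matrix.sub_mulVec, hψ, Pi.sub_apply, h2]
  rw [hsub, lap_apply, sum_eval]
  have hkT : (i:ℕ) < T := i.isLt
  have hcast2 : ((A * b / (b + 1) ^ (T + 1) : ℝ) : ℂ) = (A:ℂ) * b / u ^ (T + 1) := by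
    rw [hu]; push_cast; ring
  have hcast1 : ((-(b ^ 2 / (b + 1)) : ℝ) : ℂ) = -((b:ℂ) ^ 2 / u) := by
    rw [hu]; push_cast; ring
  simp only [Pi.sub_apply, Pi.smul_apply, hψ, smul_eq_mul, Pi.single_apply, Fin.ext_iff,
    hcast1, hcast2]
  have hupow : ∀ n : ℕ, u ^ n ≠ 0 := fun n => pow_ne_zero n hβ
  by_cases h0 : (i:ℕ) = 0
  · simp only [h0, hf]
    rw [if_pos (show 0 < T - 1 by omega), if_neg (show ¬(0 < 0 ∧ 0 ≤ T - 1) by omega),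
      if_neg (show ¬(0 = T - 1) by omega)]
    simp only [if_true]
    clear_value f u
    simp only [inv_pow]
    field_simp
    rw [hu]; ring
  · by_cases hend : (i:ℕ) = T - 1
    · obtain ⟨s, rfl⟩ : ∃ s, T = s + 2 := ⟨T - 2, by omega⟩
      have hm : (i:ℕ) = s + 1 := by omega
      simp only [hm, hf, Nat.add_sub_cancel]
      rw [if_neg (show ¬(s + 1 < s + 2 - 1) by omega),
        if_pos (show 0 < s + 1 ∧ s + 1 ≤ s + 2 - 1 by omega),
        if_neg (show ¬(s + 1 = 0) by omega), if_pos (show s + 1 = s + 2 - 1 by omega)]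
      clear_value f u
      simp only [inv_pow]
      field_simp
      rw [hu]; ring
    · obtain ⟨m, hm⟩ : ∃ m, (i:ℕ) = m + 1 := ⟨(i:ℕ) - 1, by omega⟩
      simp only [hm, hf, Nat.add_sub_cancel]
      rw [if_pos (show m + 1 < T - 1 by omega),
        if_pos (show 0 < m + 1 ∧ m + 1 ≤ T - 1 by omega),
        if_neg (show ¬(m + 1 = 0) by omega), if_neg (show ¬(m + 1 = T - 1) by omega)]
      clear_value f u
      simp only [inv_pow]
      field_simp
      rw [hu]; ring
end

section
/- Let T ≥ 2, b > 0 and |Ψ⟩ = A Σ_{t=1}^T (b+1)^{-t}|t⟩ with A² = b(2+b)/(1-(b+1)^{-2T}). Then |Ψ⟩ is a unit vector, 0 < A < b+1, and ⟨Ψ|H_b|Ψ⟩ = -b²/(b+1) - A²b/(b+1)^{2T+1}. -/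
open scoped Matrix

lemma quad_sum {T : ℕ} (s : Finset ℕ) (M : ℕ → Matrix (Fin T) (Fin T) ℂ)
    (x y : Fin T → ℂ) :
    x ⬝ᵥ (∑ t ∈ s, M t).mulVec y = ∑ t ∈ s, x ⬝ᵥ (M t).mulVec y := by
  classical
  induction s using Finset.induction with
  | empty => simp
  | @insert a s h ih =>
      rw [Finset.sum_insert h, Finset.sum_insert h, Matrix.add_mulVec,
        dotProduct_add, ih]

lemma quad_vecMulVec_s3 {T : ℕ} (u x : Fin T → ℂ) :
    x ⬝ᵥ (Matrix.vecMulVec u u).mulVec x = (x ⬝ᵥ u) * (u ⬝ᵥ x) := by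
  simp only [dotProduct, Matrix.mulVec, Matrix.vecMulVec_apply,
    Finset.sum_mul, Finset.mul_sum]
  refine Finset.sum_congr rfl fun i _ => Finset.sum_congr rfl fun j _ => by ring

lemma delta_dot {T t : ℕ} (ht : t < T) (x : Fin T → ℂ) :
    (fun i : Fin T => if (i : ℕ) = t then (1:ℂ) else 0) ⬝ᵥ x = x ⟨t, ht⟩ := by
  simp only [dotProduct]
  rw [Finset.sum_eq_single ⟨t, ht⟩]
  · simp
  · intro i _ hi
    rw [if_neg, zero_mul]
    exact fun h => hi (Fin.ext h)
  · simp

lemma diff_dot {T t : ℕ} (ht : t < T) (ht1 : t + 1 < T) (x : Fin T → ℂ) :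
    (fun i : Fin T => (if (i : ℕ) = t then (1:ℂ) else 0) -
      (if (i : ℕ) = t + 1 then 1 else 0)) ⬝ᵥ x = x ⟨t, ht⟩ - x ⟨t + 1, ht1⟩ := by
  have h := sub_dotProduct (fun i : Fin T => if (i : ℕ) = t then (1:ℂ) else 0)
    (fun i : Fin T => if (i : ℕ) = t + 1 then (1:ℂ) else 0) x
  rw [show (fun i : Fin T => (if (i : ℕ) = t then (1:ℂ) else 0) -
      (if (i : ℕ) = t + 1 then 1 else 0)) =
      (fun i : Fin T => if (i : ℕ) = t then (1:ℂ) else 0) -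
      (fun i : Fin T => if (i : ℕ) = t + 1 then (1:ℂ) else 0) from rfl, h,
    delta_dot ht, delta_dot ht1]

set_option maxHeartbeats 1000000

/-- `|Ψ⟩` is a unit vector, `0 < A < b+1`, and
`⟨Ψ|H_b|Ψ⟩ = -b²/(b+1) - A²b/(b+1)^{2T+1}`. -/
theorem stmt3 (T : ℕ) (hT : 2 ≤ T) (b : ℝ) (hb : 0 < b) (A : ℝ)
    (hA : A = Real.sqrt (b * (2 + b) / (1 - ((b + 1 : ℝ) ^ (2 * T))⁻¹))) :
    (∑ i : Fin T, ‖ansatzA T b A i‖ ^ 2 = 1) ∧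
    (0 < A ∧ A < b + 1) ∧
    star (ansatzA T b A) ⬝ᵥ (Hb T b).mulVec (ansatzA T b A)
      = ((-(b ^ 2 / (b + 1)) - A ^ 2 * b / (b + 1) ^ (2 * T + 1) : ℝ) : ℂ) := by
  -- setup
  obtain ⟨k, rfl⟩ : ∃ k, T = k + 2 := ⟨T - 2, by omega⟩
  set T := k + 2 with hTdef
  set y : ℝ := b + 1 with hy
  have hy1 : 1 < y := by rw [hy]; linarith
  have hy0 : (0:ℝ) < y := by linarith
  have hyne : y ≠ 0 := ne_of_gt hy0
  have hbdef : b = y - 1 := by rw [hy]; ring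
  set r : ℝ := y⁻¹ with hr
  have hr0 : 0 < r := by positivity
  have hr1 : r < 1 := by rw [hr]; exact inv_lt_one_of_one_lt₀ hy1
  set Q : ℝ := y ^ (2 * k + 2) with hQ
  have hQ0 : (0:ℝ) < Q := by positivity
  have hQne : Q ≠ 0 := ne_of_gt hQ0
  have hQ1 : 1 < Q := one_lt_pow₀ hy1 (by omega)
  have e2 : y ^ (2 * T) = Q * y ^ 2 := by
    rw [hQ, ← pow_add, show 2 * k + 2 + 2 = 2 * T by omega]
  have e3 : y ^ (2 * T + 1) = Q * y ^ 3 := by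
    rw [hQ, ← pow_add, show 2 * k + 2 + 3 = 2 * T + 1 by omega]
  have eT : (r ^ 2) ^ T = (Q * y ^ 2)⁻¹ := by
    rw [hr, ← pow_mul, inv_pow, e2]
  have e1 : (r ^ 2) ^ (k + 1) = Q⁻¹ := by
    rw [hr, ← pow_mul, inv_pow, hQ, show 2 * (k + 1) = 2 * k + 2 by omega]
  have hP1 : 1 < y ^ (2 * T) := by rw [e2]; nlinarith
  set N : ℝ := 1 - (y ^ (2 * T))⁻¹ with hN
  have hN0 : 0 < N := by
    rw [hN]
    have h1 : (y ^ (2 * T))⁻¹ < 1 := inv_lt_one_of_one_lt₀ hP1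
    linarith
  have hNne : N ≠ 0 := ne_of_gt hN0
  have hb2 : (0:ℝ) < b * (2 + b) := by nlinarith
  have hA2 : A ^ 2 = b * (2 + b) / N := by
    rw [hA, Real.sq_sqrt]
    positivity
  have hApos : 0 < A := by
    rw [hA]
    exact Real.sqrt_pos.mpr (by positivity)
  have hr2ne : r ^ 2 ≠ 1 := by nlinarith
  have hNQ : N = 1 - (Q * y ^ 2)⁻¹ := by rw [hN, e2]
  have hNQne : 1 - (Q * y ^ 2)⁻¹ ≠ 0 := by rw [← hNQ]; exact hNne
  clear_value N
  clear_value Q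
  clear_value r
  clear_value y
  -- cast lemma
  have hcast : ∀ i : Fin T, ansatzA T b A i = ((A * r ^ ((i : ℕ) + 1) : ℝ) : ℂ) := by
    intro i
    unfold ansatzA
    rw [hr, hy]
    push_cast
    ring
  -- norm
  have norm1 : (∑ i : Fin T, ‖ansatzA T b A i‖ ^ 2 = 1) := by
    have step1 : ∀ i : Fin T, ‖ansatzA T b A i‖ ^ 2 = A ^ 2 * r ^ 2 * (r ^ 2) ^ (i : ℕ) := by
      intro i
      rw [hcast i, Complex.norm_real, Real.norm_eq_abs, sq_abs]
      ring
    rw [Finset.sum_congr rfl fun i _ => step1 i, ← Finset.mul_sum,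
      Fin.sum_univ_eq_sum_range (fun i => (r ^ 2) ^ i) T, geom_sum_eq hr2ne, eT,
      hA2, hNQ, hr, hbdef]
    have h2 : (y:ℝ)⁻¹ ^ 2 - 1 ≠ 0 := by rw [← hr]; intro h; exact hr2ne (by linarith)
    field_simp
    have hQy1 : 1 < Q * y ^ 2 := by nlinarith
    have hD : (Q * y ^ 2 - 1) * y ^ 2 * (Q * y ^ 2 * (1 - y ^ 2)) ≠ 0 := by
      have h3 : (1:ℝ) - y ^ 2 < 0 := by nlinarith
      have h4 : (0:ℝ) < (Q * y ^ 2 - 1) * y ^ 2 :=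
        mul_pos (by linarith) (pow_pos hy0 2)
      have h5 : Q * y ^ 2 * (1 - y ^ 2) < 0 :=
        mul_neg_of_pos_of_neg (by nlinarith) h3
      exact ne_of_lt (mul_neg_of_pos_of_neg h4 h5)
    rw [div_eq_one_iff_eq (mul_ne_zero (ne_of_gt (by nlinarith)) (ne_of_lt (by nlinarith)))]
    ring
  refine ⟨norm1, ⟨hApos, ?_⟩, ?_⟩
  -- A < b + 1
  · have hsq : A ^ 2 < y ^ 2 := by
      rw [hA2, div_lt_iff₀ hN0, hNQ, hbdef]
      have h1 : y ^ 2 * (Q * y ^ 2)⁻¹ < 1 := by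
        rw [mul_inv, ← mul_assoc, mul_comm (y^2), mul_assoc,
          mul_inv_cancel₀ (by positivity : (y:ℝ)^2 ≠ 0), mul_one]
        exact inv_lt_one_of_one_lt₀ hQ1
      have expand : y ^ 2 * (1 - (Q * y ^ 2)⁻¹) = y ^ 2 - y ^ 2 * (Q * y ^ 2)⁻¹ := by ring
      have hyy : (y - 1) * (2 + (y - 1)) = y ^ 2 - 1 := by ring
      rw [expand, hyy]
      linarith
    exact lt_of_pow_lt_pow_left₀ 2 hy0.le hsq
  -- energy
  · have hstar : star (ansatzA T b A) = ansatzA T b A := by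
      funext i
      rw [Pi.star_apply, hcast i, Complex.star_def, Complex.conj_ofReal]
    rw [Hb, Matrix.sub_mulVec, dotProduct_sub, Matrix.smul_mulVec,
      dotProduct_smul, pathLap, quad_sum, hstar]
    have hT0 : 0 < T := by omega
    have term0 : ansatzA T b A ⬝ᵥ
        (Matrix.vecMulVec (fun i : Fin T => if (i : ℕ) = 0 then (1:ℂ) else 0)
          (fun i : Fin T => if (i : ℕ) = 0 then (1:ℂ) else 0)).mulVec (ansatzA T b A)
        = ((A ^ 2 * r ^ 2 : ℝ) : ℂ) := by
      rw [quad_vecMulVec_s3, dotProduct_comm, delta_dot hT0, hcast]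
      push_cast
      ring
    have terms : ∀ t ∈ Finset.range (T - 1), ansatzA T b A ⬝ᵥ
        (Matrix.vecMulVec
          (fun i : Fin T => (if (i : ℕ) = t then (1:ℂ) else 0) - (if (i : ℕ) = t + 1 then 1 else 0))
          (fun i : Fin T => (if (i : ℕ) = t then (1:ℂ) else 0) - (if (i : ℕ) = t + 1 then 1 else 0))).mulVec
          (ansatzA T b A)
        = ((A ^ 2 * (1 - r) ^ 2 * r ^ 2 * (r ^ 2) ^ t : ℝ) : ℂ) := by
      intro t ht
      rw [Finset.mem_range] at ht
      have ht1 : t < T := by omega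
      have ht2 : t + 1 < T := by omega
      rw [quad_vecMulVec_s3, dotProduct_comm, diff_dot ht1 ht2, hcast, hcast]
      push_cast
      ring
    have keyR : ∑ t ∈ Finset.range (T - 1), (A ^ 2 * (1 - r) ^ 2 * r ^ 2 * (r ^ 2) ^ t)
        - b * (A ^ 2 * r ^ 2)
        = -(b ^ 2 / y) - A ^ 2 * b / y ^ (2 * T + 1) := by
      rw [← Finset.mul_sum, show T - 1 = k + 1 by omega, geom_sum_eq hr2ne, e1, e3,
        hA2, hNQ, hr, hbdef]
      have h2 : (y:ℝ)⁻¹ ^ 2 - 1 ≠ 0 := by rw [← hr]; intro h; exact hr2ne (by linarith)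
      field_simp
      have hQy1 : 1 < Q * y ^ 2 := by nlinarith
      have hy21 : (0:ℝ) < y ^ 2 - 1 := by nlinarith
      have hS1 : -y ^ 2 + y ^ 4 * Q ≠ 0 := by nlinarith
      have hS2 : -(y ^ 4 * Q) + y ^ 6 * Q + (y ^ 6 * Q ^ 2 - y ^ 8 * Q ^ 2) ≠ 0 := by
        have hpos : (0:ℝ) < Q * y ^ 4 * (y ^ 2 - 1) :=
          mul_pos (mul_pos hQ0 (pow_pos hy0 4)) hy21
        have hneg : Q * y ^ 4 * (y ^ 2 - 1) * (1 - Q * y ^ 2) < 0 :=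
          mul_neg_of_pos_of_neg hpos (by linarith)
        intro h
        rw [show -(y ^ 4 * Q) + y ^ 6 * Q + (y ^ 6 * Q ^ 2 - y ^ 8 * Q ^ 2)
          = Q * y ^ 4 * (y ^ 2 - 1) * (1 - Q * y ^ 2) from by ring] at h
        exact absurd h (ne_of_lt hneg)
      have hqy : Q * y ^ 2 - 1 ≠ 0 := by nlinarith
      have h1y : (1:ℝ) - y ^ 2 ≠ 0 := by nlinarith
      field_simp [hqy, h1y, (ne_of_gt (by nlinarith) : y ^ 2 * Q - 1 ≠ 0),
        (ne_of_gt (by nlinarith) : -1 + y ^ 2 * Q ≠ 0)]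
      ring
    rw [Finset.sum_congr rfl terms, term0, smul_eq_mul, ← Complex.ofReal_sum,
      ← Complex.ofReal_mul, ← Complex.ofReal_sub, keyR]
end

section
/- Let h₁,...,h_N be Hermitian operators on a Hilbert space ℋ and suppose tiling projectors force all cross terms to vanish: for i ≠ j and operators of the form V_i = h_i ⊗ |T_i⟩⟨T_i|_i acting on ℋ ⊗ (⊗_k ℂ^{T_k}) on distinct tensor factors with additional mutually orthogonal tile projectors, V_i V_j = 0. Then for the self-energy series, the n-th order term is V₋₊(G₊V₊)^n G₊V₊₋ = Σ_{i=1}^N p_{0,i}² η_i^{n+1} h_i^{n+2} ⊗ Π₋, where p_{0,i} = ⟨T_i|Ψ_{0,i}⟩, η_i(z) = Σ_{k>0} (z - μ_{k,i})^{-1} |⟨T_i|Ψ_{k,i}⟩|², with {|Ψ_{k,i}⟩, μ_{k,i}} the eigensystem of the i-th ancilla Hamiltonian (μ_{0,i} = 0 its ground energy) and Π₋ the projector onto the joint ancilla ground space. -/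
open scoped Matrix

section Gadget

variable {σ : Type*} [Fintype σ] [DecidableEq σ]
variable {N : ℕ} {T : Fin N → ℕ} [∀ k, NeZero (T k)]

/-- The joint ancilla configuration space: one chain `Fin (T k)` per interaction. -/
abbrev Anc (T : Fin N → ℕ) : Type _ := ∀ k : Fin N, Fin (T k)

/-- Kronecker product of a system operator with an ancilla operator. -/
def kron (M : Matrix σ σ ℂ) (Q : Matrix (Anc T) (Anc T) ℂ) :
    Matrix (σ × Anc T) (σ × Anc T) ℂ :=
  Matrix.of fun x y => M x.1 y.1 * Q x.2 y.2

/-- The projector `|T_i⟩⟨T_i|` on ancilla factor `i`, identity on all other factors. -/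
def Qproj (Tidx : ∀ k : Fin N, Fin (T k)) (i : Fin N) : Matrix (Anc T) (Anc T) ℂ :=
  Matrix.of fun g g' =>
    if g i = Tidx i ∧ g' i = Tidx i ∧ ∀ j, j ≠ i → g j = g' j then 1 else 0

/-- The joint ground-space projector `Π₋ = ⊗_k |Ψ_{0,k}⟩⟨Ψ_{0,k}|`. -/
def Pminus (Ψ : ∀ k : Fin N, Fin (T k) → Fin (T k) → ℂ) : Matrix (Anc T) (Anc T) ℂ :=
  Matrix.of fun g g' => ∏ k, Ψ k 0 (g k) * star (Ψ k 0 (g' k))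

/-- `G₊(z) = Π₊ (z - C ∑_k H_clock^{(k)})⁻¹ Π₊`, written spectrally: the sum over all
joint excited ancilla eigenstates `f ≠ 0` of `(z - C ∑_k μ_{f k,k})⁻¹ |Φ_f⟩⟨Φ_f|`. -/
noncomputable def Gplus (Ψ : ∀ k : Fin N, Fin (T k) → Fin (T k) → ℂ)
    (μ : ∀ k : Fin N, Fin (T k) → ℝ) (C : ℝ) (z : ℂ) : Matrix (Anc T) (Anc T) ℂ :=
  Matrix.of fun g g' =>
    ∑ f ∈ Finset.univ.erase (fun k => (0 : Fin (T k))),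
      (z - (C : ℂ) * ∑ k, (μ k (f k) : ℂ))⁻¹ *
        (∏ k, Ψ k (f k) (g k)) * star (∏ k, Ψ k (f k) (g' k))

/-- `η_i(z) = ∑_{k>0} (z - C μ_{k,i})⁻¹ |⟨T_i|Ψ_{k,i}⟩|²`. -/
noncomputable def eta (Ψ : ∀ k : Fin N, Fin (T k) → Fin (T k) → ℂ)
    (μ : ∀ k : Fin N, Fin (T k) → ℝ) (C : ℝ) (z : ℂ)
    (Tidx : ∀ k : Fin N, Fin (T k)) (i : Fin N) : ℂ :=
  ∑ k ∈ Finset.univ.erase (0 : Fin (T i)),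
    (z - (C : ℂ) * (μ i k : ℂ))⁻¹ * ((‖Ψ i k (Tidx i)‖ ^ 2 : ℝ) : ℂ)

end Gadget

namespace Stmt14Aux

open Matrix Finset

variable {N : ℕ} {T : Fin N → ℕ} [∀ k, NeZero (T k)]

/-- The joint product eigenvector `Φ_f`. -/
def Phi (Ψ : ∀ k : Fin N, Fin (T k) → Fin (T k) → ℂ) (f : Anc T) : Anc T → ℂ :=
  fun g => ∏ k, Ψ k (f k) (g k)

/-- The joint ground configuration. -/
abbrev z0 (T : Fin N → ℕ) [∀ k, NeZero (T k)] : Anc T := fun _ => 0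

variable (Ψ : ∀ k : Fin N, Fin (T k) → Fin (T k) → ℂ)
  (μ : ∀ k : Fin N, Fin (T k) → ℝ) (C : ℝ) (z : ℂ)
  (Tidx : ∀ k : Fin N, Fin (T k)) (i : Fin N)

lemma star_entry (hreal : ∀ i k t, (Ψ i k t).im = 0) (i k t) :
    star (Ψ i k t) = Ψ i k t := by
  rw [Complex.star_def]
  exact Complex.conj_eq_iff_im.mpr (hreal i k t)

lemma star_Phi (hreal : ∀ i k t, (Ψ i k t).im = 0) (f g) :
    star (Phi Ψ f g) = Phi Ψ f g := by
  unfold Phi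
  rw [star_prod]
  exact Finset.prod_congr rfl fun k _ => star_entry Ψ hreal k (f k) (g k)

lemma orth_row (horth : ∀ i k l, star (Ψ i k) ⬝ᵥ Ψ i l = if k = l then (1 : ℂ) else 0)
    (hreal : ∀ i k t, (Ψ i k t).im = 0) (i k l) :
    ∑ t, Ψ i k t * Ψ i l t = if k = l then (1 : ℂ) else 0 := by
  have h := horth i k l
  simp only [dotProduct, Pi.star_apply] at h
  rw [← h]
  exact Finset.sum_congr rfl fun t _ => by rw [star_entry Ψ hreal]

lemma orth_col (horth : ∀ i k l, star (Ψ i k) ⬝ᵥ Ψ i l = if k = l then (1 : ℂ) else 0)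
    (hreal : ∀ i k t, (Ψ i k t).im = 0) (i t t') :
    ∑ k, Ψ i k t * Ψ i k t' = if t = t' then (1 : ℂ) else 0 := by
  have hU : (Matrix.of (Ψ i)) * (Matrix.of (Ψ i))ᴴ = 1 := by
    ext k l
    rw [Matrix.mul_apply, Matrix.one_apply]
    simp only [Matrix.conjTranspose_apply, Matrix.of_apply]
    rw [← orth_row Ψ horth hreal i k l]
    exact Finset.sum_congr rfl fun t _ => by rw [star_entry Ψ hreal]
  have hU2 := mul_eq_one_comm.mp hU
  have h := congrFun (congrFun hU2 t) t'
  rw [Matrix.mul_apply, Matrix.one_apply] at h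
  simp only [Matrix.conjTranspose_apply, Matrix.of_apply] at h
  rw [← h]
  exact Finset.sum_congr rfl fun k _ => by rw [star_entry Ψ hreal]

lemma Phi_orth (horth : ∀ i k l, star (Ψ i k) ⬝ᵥ Ψ i l = if k = l then (1 : ℂ) else 0)
    (hreal : ∀ i k t, (Ψ i k t).im = 0) (f f' : Anc T) :
    ∑ g, Phi Ψ f g * Phi Ψ f' g = if f = f' then (1 : ℂ) else 0 := by
  have h1 : ∀ g : Anc T, Phi Ψ f g * Phi Ψ f' g
      = ∏ k, (Ψ k (f k) (g k) * Ψ k (f' k) (g k)) := fun g =>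
    (Finset.prod_mul_distrib).symm
  simp_rw [h1]
  rw [← Fintype.prod_sum fun k t => Ψ k (f k) t * Ψ k (f' k) t]
  have h2 : ∀ k : Fin N, (∑ t, Ψ k (f k) t * Ψ k (f' k) t)
      = if f k = f' k then (1:ℂ) else 0 := fun k => orth_row Ψ horth hreal k (f k) (f' k)
  simp_rw [h2]
  rw [Finset.prod_boole]
  simp [funext_iff]

end Stmt14Aux
namespace Stmt14Aux

open Matrix Finset

set_option linter.unusedSectionVars false

variable {N : ℕ} {T : Fin N → ℕ} [∀ k, NeZero (T k)]

variable (Ψ : ∀ k : Fin N, Fin (T k) → Fin (T k) → ℂ)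
  (μ : ∀ k : Fin N, Fin (T k) → ℝ) (C : ℝ) (z : ℂ)
  (Tidx : ∀ k : Fin N, Fin (T k)) (i : Fin N)

/-- sum of row vectors times a matrix -/
lemma sum_vecMul {ι : Type*} (s : Finset ι) (v : ι → Anc T → ℂ)
    (M : Matrix (Anc T) (Anc T) ℂ) :
    (∑ x ∈ s, v x) ᵥ* M = ∑ x ∈ s, (v x) ᵥ* M := by
  funext g
  simp only [Matrix.vecMul, dotProduct, Finset.sum_apply, Finset.sum_mul]
  rw [Finset.sum_comm]

lemma vecMulVec_mul_mat (a b : Anc T → ℂ) (M : Matrix (Anc T) (Anc T) ℂ) :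
    vecMulVec a b * M = vecMulVec a (b ᵥ* M) := by
  ext g g'
  simp only [Matrix.mul_apply, Matrix.vecMulVec_apply, Matrix.vecMul, dotProduct,
    Finset.mul_sum, mul_assoc]

lemma vecMulVec_smul_right (a b : Anc T → ℂ) (c : ℂ) :
    vecMulVec a (c • b) = c • vecMulVec a b := by
  ext g g'
  simp only [Matrix.vecMulVec_apply, Pi.smul_apply, Matrix.smul_apply, smul_eq_mul]
  ring

lemma Pm_eq (hreal : ∀ i k t, (Ψ i k t).im = 0) :
    Pminus Ψ = vecMulVec (Phi Ψ (z0 T)) (Phi Ψ (z0 T)) := by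
  ext g g'
  simp only [Pminus, Matrix.of_apply, Matrix.vecMulVec_apply]
  rw [Finset.prod_mul_distrib, ← star_prod]
  show Phi Ψ (z0 T) g * star (Phi Ψ (z0 T) g') = _
  rw [star_Phi Ψ hreal]

/-- row-vector action of `Qproj`. -/
lemma vecMul_Q (a : Anc T → ℂ) (g' : Anc T) :
    (a ᵥ* Qproj Tidx i) g' =
      if g' i = Tidx i then a (Function.update g' i (Tidx i)) else 0 := by
  simp only [Matrix.vecMul, dotProduct, Qproj, Matrix.of_apply]
  have key : ∀ g : Anc T,
      (g i = Tidx i ∧ g' i = Tidx i ∧ ∀ j, j ≠ i → g j = g' j)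
        ↔ (g' i = Tidx i ∧ g = Function.update g' i (Tidx i)) := by
    intro g
    constructor
    · rintro ⟨h1, h2, h3⟩
      refine ⟨h2, funext fun j => ?_⟩
      by_cases hj : j = i
      · subst hj; rw [Function.update_self, h1]
      · rw [Function.update_of_ne hj]; exact h3 j hj
    · rintro ⟨h2, rfl⟩
      exact ⟨Function.update_self _ _ _, h2, fun j hj => Function.update_of_ne hj _ _⟩
  simp_rw [key]
  by_cases hg : g' i = Tidx i
  · simp only [hg, true_and, mul_ite, mul_one, mul_zero]
    exact Finset.sum_ite_eq' Finset.univ _ a |>.trans (by simp)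
  · simp [hg]

/-- the "tile column" vector `e_i`. -/
def eVec (Ψ : ∀ k : Fin N, Fin (T k) → Fin (T k) → ℂ)
    (Tidx : ∀ k : Fin N, Fin (T k)) (i : Fin N) : Anc T → ℂ :=
  fun g => if g i = Tidx i then ∏ j ∈ Finset.univ.erase i, Ψ j 0 (g j) else 0

lemma Phi_update_eval (k : Fin (T i)) (g' : Anc T) :
    Phi Ψ (Function.update (z0 T) i k) (Function.update g' i (Tidx i))
      = Ψ i k (Tidx i) * ∏ j ∈ Finset.univ.erase i, Ψ j 0 (g' j) := by
  unfold Phi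
  rw [← Finset.mul_prod_erase Finset.univ _ (Finset.mem_univ i)]
  congr 1
  · rw [Function.update_self, Function.update_self]
  · refine Finset.prod_congr rfl fun j hj => ?_
    have hji : j ≠ i := (Finset.mem_erase.mp hj).1
    rw [Function.update_of_ne hji, Function.update_of_ne hji]

lemma Phi_upd_vecMul_Q (k : Fin (T i)) :
    Phi Ψ (Function.update (z0 T) i k) ᵥ* Qproj Tidx i = Ψ i k (Tidx i) • eVec Ψ Tidx i := by
  funext g'
  rw [vecMul_Q]
  by_cases hg : g' i = Tidx i
  · rw [if_pos hg, Phi_update_eval]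
    simp [eVec, hg]
  · simp [eVec, hg]

lemma upd_eq_z0 (k : Fin (T i)) :
    Function.update (z0 T) i k = z0 T ↔ k = 0 := by
  constructor
  · intro h
    have := congrFun h i
    rwa [Function.update_self] at this
  · rintro rfl
    exact Function.update_eq_self i (z0 T)

lemma u_vecMul_Q : Phi Ψ (z0 T) ᵥ* Qproj Tidx i = Ψ i 0 (Tidx i) • eVec Ψ Tidx i := by
  have h := Phi_upd_vecMul_Q Ψ Tidx i 0
  rwa [(upd_eq_z0 (T := T) i 0).mpr rfl] at h

lemma eVec_eq (horth : ∀ i k l, star (Ψ i k) ⬝ᵥ Ψ i l = if k = l then (1 : ℂ) else 0)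
    (hreal : ∀ i k t, (Ψ i k t).im = 0) :
    eVec Ψ Tidx i = ∑ k, Ψ i k (Tidx i) • Phi Ψ (Function.update (z0 T) i k) := by
  funext g
  have hP : ∀ k : Fin (T i), Phi Ψ (Function.update (z0 T) i k) g
      = Ψ i k (g i) * ∏ j ∈ Finset.univ.erase i, Ψ j 0 (g j) := by
    intro k
    unfold Phi
    rw [← Finset.mul_prod_erase Finset.univ _ (Finset.mem_univ i)]
    congr 1
    · rw [Function.update_self]
    · refine Finset.prod_congr rfl fun j hj => ?_
      rw [Function.update_of_ne (Finset.mem_erase.mp hj).1]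
  simp only [Finset.sum_apply, Pi.smul_apply, smul_eq_mul, hP]
  have : ∑ k, Ψ i k (Tidx i) * (Ψ i k (g i) * ∏ j ∈ Finset.univ.erase i, Ψ j 0 (g j))
      = (∑ k, Ψ i k (Tidx i) * Ψ i k (g i)) * ∏ j ∈ Finset.univ.erase i, Ψ j 0 (g j) := by
    rw [Finset.sum_mul]
    exact Finset.sum_congr rfl fun k _ => by ring
  rw [this, orth_col Ψ horth hreal]
  simp only [eVec]
  by_cases hg : g i = Tidx i
  · rw [if_pos hg, if_pos hg.symm, one_mul]
  · rw [if_neg hg, if_neg (fun h => hg h.symm), zero_mul]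

end Stmt14Aux
namespace Stmt14Aux

open Matrix Finset

set_option linter.unusedSectionVars false

variable {N : ℕ} {T : Fin N → ℕ} [∀ k, NeZero (T k)]

variable (Ψ : ∀ k : Fin N, Fin (T k) → Fin (T k) → ℂ)
  (μ : ∀ k : Fin N, Fin (T k) → ℝ) (C : ℝ) (z : ℂ)
  (Tidx : ∀ k : Fin N, Fin (T k)) (i : Fin N)

lemma Phi_vecMul_Gp (horth : ∀ i k l, star (Ψ i k) ⬝ᵥ Ψ i l = if k = l then (1 : ℂ) else 0)
    (hreal : ∀ i k t, (Ψ i k t).im = 0) (f : Anc T) :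
    Phi Ψ f ᵥ* Gplus Ψ μ C z =
      if f = z0 T then 0
      else (z - (C : ℂ) * ∑ k, (μ k (f k) : ℂ))⁻¹ • Phi Ψ f := by
  funext g'
  simp only [Matrix.vecMul, dotProduct, Gplus, Matrix.of_apply]
  have h0 : ∀ g : Anc T, Phi Ψ f g * (∑ f' ∈ Finset.univ.erase (z0 T),
      (z - (C : ℂ) * ∑ k, (μ k (f' k) : ℂ))⁻¹ *
        (∏ k, Ψ k (f' k) (g k)) * star (∏ k, Ψ k (f' k) (g' k)))
      = ∑ f' ∈ Finset.univ.erase (z0 T), Phi Ψ f g *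
        ((z - (C : ℂ) * ∑ k, (μ k (f' k) : ℂ))⁻¹ *
          (∏ k, Ψ k (f' k) (g k)) * star (∏ k, Ψ k (f' k) (g' k))) := fun g =>
    Finset.mul_sum _ _ _
  simp_rw [h0]
  rw [Finset.sum_comm]
  have h1 : ∀ f' ∈ Finset.univ.erase (z0 T),
      (∑ g, Phi Ψ f g * ((z - (C : ℂ) * ∑ k, (μ k (f' k) : ℂ))⁻¹ *
          (∏ k, Ψ k (f' k) (g k)) * star (∏ k, Ψ k (f' k) (g' k))))
        = if f = f' then (z - (C : ℂ) * ∑ k, (μ k (f' k) : ℂ))⁻¹ * Phi Ψ f' g' else 0 := by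
    intro f' _
    have hs : star (∏ k, Ψ k (f' k) (g' k)) = Phi Ψ f' g' := star_Phi Ψ hreal f' g'
    have : ∀ g, Phi Ψ f g * ((z - (C : ℂ) * ∑ k, (μ k (f' k) : ℂ))⁻¹ *
          (∏ k, Ψ k (f' k) (g k)) * star (∏ k, Ψ k (f' k) (g' k)))
        = ((z - (C : ℂ) * ∑ k, (μ k (f' k) : ℂ))⁻¹ * Phi Ψ f' g') *
            (Phi Ψ f g * Phi Ψ f' g) := by
      intro g
      rw [hs]
      show Phi Ψ f g * (_ * Phi Ψ f' g * Phi Ψ f' g') = _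
      ring
    simp_rw [this]
    rw [← Finset.mul_sum, Phi_orth Ψ horth hreal]
    split_ifs with hf
    · rw [mul_one]
    · rw [mul_zero]
  rw [Finset.sum_congr rfl h1, Finset.sum_ite_eq]
  by_cases hf : f = z0 T
  · simp [hf]
  · simp [hf, Finset.mem_erase]

lemma Phi_vecMul_Pm (horth : ∀ i k l, star (Ψ i k) ⬝ᵥ Ψ i l = if k = l then (1 : ℂ) else 0)
    (hreal : ∀ i k t, (Ψ i k t).im = 0) (f : Anc T) :
    Phi Ψ f ᵥ* Pminus Ψ = if f = z0 T then Phi Ψ (z0 T) else 0 := by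
  rw [Pm_eq Ψ hreal]
  funext g'
  simp only [Matrix.vecMul, dotProduct, Matrix.vecMulVec_apply]
  have : ∀ g, Phi Ψ f g * (Phi Ψ (z0 T) g * Phi Ψ (z0 T) g')
      = (Phi Ψ f g * Phi Ψ (z0 T) g) * Phi Ψ (z0 T) g' := fun g => by ring
  simp_rw [this]
  rw [← Finset.sum_mul, Phi_orth Ψ horth hreal]
  split_ifs with hf <;> simp

lemma Phi_vecMul_Pp (horth : ∀ i k l, star (Ψ i k) ⬝ᵥ Ψ i l = if k = l then (1 : ℂ) else 0)
    (hreal : ∀ i k t, (Ψ i k t).im = 0) (f : Anc T) :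
    Phi Ψ f ᵥ* (1 - Pminus Ψ) = if f = z0 T then 0 else Phi Ψ f := by
  rw [Matrix.vecMul_sub, Matrix.vecMul_one, Phi_vecMul_Pm Ψ horth hreal]
  split_ifs with hf
  · rw [hf, sub_self]
  · rw [sub_zero]

lemma upd_resolvent (hground : ∀ i, μ i 0 = 0) (k : Fin (T i)) :
    (z - (C : ℂ) * ∑ j, (μ j (Function.update (z0 T) i k j) : ℂ))
      = z - (C : ℂ) * (μ i k : ℂ) := by
  congr 2
  rw [← Finset.add_sum_erase Finset.univ _ (Finset.mem_univ i), Function.update_self]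
  have : ∀ j ∈ Finset.univ.erase i, ((μ j (Function.update (z0 T) i k j) : ℂ)) = 0 := by
    intro j hj
    rw [Function.update_of_ne (Finset.mem_erase.mp hj).1]
    show ((μ j (z0 T j) : ℝ) : ℂ) = 0
    show ((μ j 0 : ℝ) : ℂ) = 0
    rw [hground j, Complex.ofReal_zero]
  rw [Finset.sum_congr rfl this]
  simp

/-- `e ᵥ* G₊` -/
lemma eVec_vecMul_Gp (horth : ∀ i k l, star (Ψ i k) ⬝ᵥ Ψ i l = if k = l then (1 : ℂ) else 0)
    (hreal : ∀ i k t, (Ψ i k t).im = 0) (hground : ∀ i, μ i 0 = 0) :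
    eVec Ψ Tidx i ᵥ* Gplus Ψ μ C z =
      ∑ k ∈ Finset.univ.erase (0 : Fin (T i)),
        ((z - (C : ℂ) * (μ i k : ℂ))⁻¹ * Ψ i k (Tidx i)) •
          Phi Ψ (Function.update (z0 T) i k) := by
  rw [eVec_eq Ψ Tidx i horth hreal, sum_vecMul]
  simp_rw [Matrix.smul_vecMul, Phi_vecMul_Gp Ψ μ C z horth hreal]
  rw [← Finset.add_sum_erase Finset.univ _ (Finset.mem_univ (0 : Fin (T i)))]
  rw [if_pos ((upd_eq_z0 (T := T) i 0).mpr rfl), smul_zero, zero_add]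
  refine Finset.sum_congr rfl fun k hk => ?_
  have hk0 : k ≠ 0 := (Finset.mem_erase.mp hk).1
  rw [if_neg (fun h => hk0 ((upd_eq_z0 (T := T) i k).mp h)),
    upd_resolvent μ C z i hground k, smul_smul, mul_comm]

lemma eVec_vecMul_Pm (horth : ∀ i k l, star (Ψ i k) ⬝ᵥ Ψ i l = if k = l then (1 : ℂ) else 0)
    (hreal : ∀ i k t, (Ψ i k t).im = 0) :
    eVec Ψ Tidx i ᵥ* Pminus Ψ = Ψ i 0 (Tidx i) • Phi Ψ (z0 T) := by
  rw [eVec_eq Ψ Tidx i horth hreal, sum_vecMul]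
  simp_rw [Matrix.smul_vecMul, Phi_vecMul_Pm Ψ horth hreal]
  rw [Finset.sum_eq_single (0 : Fin (T i))]
  · rw [if_pos ((upd_eq_z0 (T := T) i 0).mpr rfl)]
  · intro k _ hk0
    rw [if_neg (fun h => hk0 ((upd_eq_z0 (T := T) i k).mp h)), smul_zero]
  · intro h
    exact absurd (Finset.mem_univ _) h

lemma eVec_vecMul_Pp (horth : ∀ i k l, star (Ψ i k) ⬝ᵥ Ψ i l = if k = l then (1 : ℂ) else 0)
    (hreal : ∀ i k t, (Ψ i k t).im = 0) :
    eVec Ψ Tidx i ᵥ* (1 - Pminus Ψ) = eVec Ψ Tidx i - Ψ i 0 (Tidx i) • Phi Ψ (z0 T) := by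
  rw [Matrix.vecMul_sub, Matrix.vecMul_one, eVec_vecMul_Pm Ψ Tidx i horth hreal]

end Stmt14Aux
namespace Stmt14Aux

open Matrix Finset

set_option linter.unusedSectionVars false

variable {N : ℕ} {T : Fin N → ℕ} [∀ k, NeZero (T k)]

variable (Ψ : ∀ k : Fin N, Fin (T k) → Fin (T k) → ℂ)
  (μ : ∀ k : Fin N, Fin (T k) → ℝ) (C : ℝ) (z : ℂ)
  (Tidx : ∀ k : Fin N, Fin (T k)) (i : Fin N)

/-- `η` with real entries squared -/
noncomputable def etaP (Ψ : ∀ k : Fin N, Fin (T k) → Fin (T k) → ℂ)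
    (μ : ∀ k : Fin N, Fin (T k) → ℝ) (C : ℝ) (z : ℂ)
    (Tidx : ∀ k : Fin N, Fin (T k)) (i : Fin N) : ℂ :=
  ∑ k ∈ Finset.univ.erase (0 : Fin (T i)),
    (z - (C : ℂ) * (μ i k : ℂ))⁻¹ * Ψ i k (Tidx i) ^ 2

section Chain

/-- `(e ᵥ* G₊)` is unchanged by `Π₊` -/
lemma eGp_vecMul_Pp (horth : ∀ i k l, star (Ψ i k) ⬝ᵥ Ψ i l = if k = l then (1 : ℂ) else 0)
    (hreal : ∀ i k t, (Ψ i k t).im = 0) (hground : ∀ i, μ i 0 = 0)  :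
    (eVec Ψ Tidx i ᵥ* Gplus Ψ μ C z) ᵥ* (1 - Pminus Ψ)
      = eVec Ψ Tidx i ᵥ* Gplus Ψ μ C z := by
  rw [eVec_vecMul_Gp Ψ μ C z Tidx i horth hreal hground, sum_vecMul]
  refine Finset.sum_congr rfl fun k hk => ?_
  rw [Matrix.smul_vecMul, Phi_vecMul_Pp Ψ horth hreal,
    if_neg (fun h => (Finset.mem_erase.mp hk).1 ((upd_eq_z0 (T := T) i k).mp h))]

/-- `(e ᵥ* G₊) ᵥ* Q = η • e` -/
lemma eGp_vecMul_Q (horth : ∀ i k l, star (Ψ i k) ⬝ᵥ Ψ i l = if k = l then (1 : ℂ) else 0)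
    (hreal : ∀ i k t, (Ψ i k t).im = 0) (hground : ∀ i, μ i 0 = 0)  :
    (eVec Ψ Tidx i ᵥ* Gplus Ψ μ C z) ᵥ* Qproj Tidx i
      = etaP Ψ μ C z Tidx i • eVec Ψ Tidx i := by
  rw [eVec_vecMul_Gp Ψ μ C z Tidx i horth hreal hground, sum_vecMul]
  have : ∀ k ∈ Finset.univ.erase (0 : Fin (T i)),
      (((z - (C : ℂ) * (μ i k : ℂ))⁻¹ * Ψ i k (Tidx i)) •
        Phi Ψ (Function.update (z0 T) i k)) ᵥ* Qproj Tidx i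
      = ((z - (C : ℂ) * (μ i k : ℂ))⁻¹ * Ψ i k (Tidx i) ^ 2) • eVec Ψ Tidx i := by
    intro k _
    rw [Matrix.smul_vecMul, Phi_upd_vecMul_Q Ψ Tidx i k, smul_smul]
    congr 1
    ring
  rw [Finset.sum_congr rfl this, ← Finset.sum_smul, etaP]

/-- the eigen-row-vector `v = e - p•u` -/
noncomputable def vv (Ψ : ∀ k : Fin N, Fin (T k) → Fin (T k) → ℂ)
    (Tidx : ∀ k : Fin N, Fin (T k)) (i : Fin N) : Anc T → ℂ :=
  eVec Ψ Tidx i - Ψ i 0 (Tidx i) • Phi Ψ (z0 T)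

lemma vv_vecMul_Gp (horth : ∀ i k l, star (Ψ i k) ⬝ᵥ Ψ i l = if k = l then (1 : ℂ) else 0)
    (hreal : ∀ i k t, (Ψ i k t).im = 0) (hground : ∀ i, μ i 0 = 0)  :
    vv Ψ Tidx i ᵥ* Gplus Ψ μ C z = eVec Ψ Tidx i ᵥ* Gplus Ψ μ C z := by
  rw [vv, Matrix.sub_vecMul, Matrix.smul_vecMul, Phi_vecMul_Gp Ψ μ C z horth hreal,
    if_pos rfl, smul_zero, sub_zero]

lemma vv_eigen (horth : ∀ i k l, star (Ψ i k) ⬝ᵥ Ψ i l = if k = l then (1 : ℂ) else 0)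
    (hreal : ∀ i k t, (Ψ i k t).im = 0) (hground : ∀ i, μ i 0 = 0)  :
    vv Ψ Tidx i ᵥ* (Gplus Ψ μ C z * ((1 - Pminus Ψ) * Qproj Tidx i * (1 - Pminus Ψ)))
      = etaP Ψ μ C z Tidx i • vv Ψ Tidx i := by
  rw [← Matrix.vecMul_vecMul, ← Matrix.vecMul_vecMul, ← Matrix.vecMul_vecMul,
    vv_vecMul_Gp Ψ μ C z Tidx i horth hreal hground,
    eGp_vecMul_Pp Ψ μ C z Tidx i horth hreal hground,
    eGp_vecMul_Q Ψ μ C z Tidx i horth hreal hground,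
    Matrix.smul_vecMul, eVec_vecMul_Pp Ψ Tidx i horth hreal]
  rfl

lemma vv_eigen_pow (horth : ∀ i k l, star (Ψ i k) ⬝ᵥ Ψ i l = if k = l then (1 : ℂ) else 0)
    (hreal : ∀ i k t, (Ψ i k t).im = 0) (hground : ∀ i, μ i 0 = 0)  (n : ℕ) :
    vv Ψ Tidx i ᵥ* (Gplus Ψ μ C z * ((1 - Pminus Ψ) * Qproj Tidx i * (1 - Pminus Ψ))) ^ n
      = (etaP Ψ μ C z Tidx i) ^ n • vv Ψ Tidx i := by
  induction n with
  | zero => simp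
  | succ n ih =>
      rw [pow_succ, ← Matrix.vecMul_vecMul, ih, Matrix.smul_vecMul,
        vv_eigen Ψ μ C z Tidx i horth hreal hground, smul_smul, ← pow_succ]

/-- core ancilla identity -/
lemma Pm_mul_left (hreal : ∀ i k t, (Ψ i k t).im = 0) (X : Matrix (Anc T) (Anc T) ℂ) :
    Pminus Ψ * X = vecMulVec (Phi Ψ (z0 T)) (Phi Ψ (z0 T) ᵥ* X) := by
  rw [Pm_eq Ψ hreal, vecMulVec_mul_mat]

lemma core (horth : ∀ i k l, star (Ψ i k) ⬝ᵥ Ψ i l = if k = l then (1 : ℂ) else 0)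
    (hreal : ∀ i k t, (Ψ i k t).im = 0) (hground : ∀ i, μ i 0 = 0) (n : ℕ) :
    (Pminus Ψ * Qproj Tidx i * (1 - Pminus Ψ)) *
        (Gplus Ψ μ C z * ((1 - Pminus Ψ) * Qproj Tidx i * (1 - Pminus Ψ))) ^ n *
        (Gplus Ψ μ C z * ((1 - Pminus Ψ) * Qproj Tidx i * Pminus Ψ))
      = (Ψ i 0 (Tidx i) ^ 2 * etaP Ψ μ C z Tidx i ^ (n + 1)) • Pminus Ψ := by
  have hD : vv Ψ Tidx i ᵥ* (Gplus Ψ μ C z * ((1 - Pminus Ψ) * Qproj Tidx i * Pminus Ψ))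
      = (etaP Ψ μ C z Tidx i * Ψ i 0 (Tidx i)) • Phi Ψ (z0 T) := by
    rw [← Matrix.vecMul_vecMul, ← Matrix.vecMul_vecMul, ← Matrix.vecMul_vecMul,
      vv_vecMul_Gp Ψ μ C z Tidx i horth hreal hground,
      eGp_vecMul_Pp Ψ μ C z Tidx i horth hreal hground,
      eGp_vecMul_Q Ψ μ C z Tidx i horth hreal hground,
      Matrix.smul_vecMul, eVec_vecMul_Pm Ψ Tidx i horth hreal, smul_smul]
  calc (Pminus Ψ * Qproj Tidx i * (1 - Pminus Ψ)) *
        (Gplus Ψ μ C z * ((1 - Pminus Ψ) * Qproj Tidx i * (1 - Pminus Ψ))) ^ n *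
        (Gplus Ψ μ C z * ((1 - Pminus Ψ) * Qproj Tidx i * Pminus Ψ))
      = Pminus Ψ * (Qproj Tidx i * ((1 - Pminus Ψ) *
          ((Gplus Ψ μ C z * ((1 - Pminus Ψ) * Qproj Tidx i * (1 - Pminus Ψ))) ^ n *
            (Gplus Ψ μ C z * ((1 - Pminus Ψ) * Qproj Tidx i * Pminus Ψ))))) := by
        simp only [Matrix.mul_assoc]
    _ = (Ψ i 0 (Tidx i) ^ 2 * etaP Ψ μ C z Tidx i ^ (n + 1)) • Pminus Ψ := by
        rw [Pm_mul_left Ψ hreal, ← Matrix.vecMul_vecMul, ← Matrix.vecMul_vecMul,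
          ← Matrix.vecMul_vecMul, u_vecMul_Q Ψ Tidx i, Matrix.smul_vecMul,
          eVec_vecMul_Pp Ψ Tidx i horth hreal]
        have hv : eVec Ψ Tidx i - Ψ i 0 (Tidx i) • Phi Ψ (z0 T) = vv Ψ Tidx i := rfl
        rw [hv, Matrix.smul_vecMul,
          vv_eigen_pow Ψ μ C z Tidx i horth hreal hground n, Matrix.smul_vecMul,
          Matrix.smul_vecMul, hD,
          smul_smul, smul_smul, vecMulVec_smul_right, ← Pm_eq Ψ hreal]
        congr 1
        ring

end Chain

end Stmt14Aux
namespace Stmt14Aux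

open Matrix Finset

set_option linter.unusedSectionVars false

variable {σ : Type*} [Fintype σ] [DecidableEq σ]
variable {N : ℕ} {T : Fin N → ℕ} [∀ k, NeZero (T k)]

lemma kron_mul (M M' : Matrix σ σ ℂ) (Q Q' : Matrix (Anc T) (Anc T) ℂ) :
    kron M Q * kron M' Q' = kron (M * M') (Q * Q') := by
  ext x y
  simp only [kron, Matrix.mul_apply, Matrix.of_apply]
  rw [Fintype.sum_prod_type, Finset.sum_mul_sum]
  exact Finset.sum_congr rfl fun s _ => Finset.sum_congr rfl fun a _ => by ring

lemma kron_zero (Q : Matrix (Anc T) (Anc T) ℂ) : kron (0 : Matrix σ σ ℂ) Q = 0 := by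
  ext x y
  simp [kron]

lemma kron_smul_right (c : ℂ) (M : Matrix σ σ ℂ) (Q : Matrix (Anc T) (Anc T) ℂ) :
    kron M (c • Q) = c • kron M Q := by
  ext x y
  simp only [kron, Matrix.of_apply, Matrix.smul_apply, smul_eq_mul]
  ring

/-- sandwich: `kron 1 X * (∑ kron (h i) (Q i)) * kron 1 Y = ∑ kron (h i) (X*Q i*Y)` -/
lemma kron_sandwich (h : Fin N → Matrix σ σ ℂ) (Qv : Fin N → Matrix (Anc T) (Anc T) ℂ)
    (X Y : Matrix (Anc T) (Anc T) ℂ) :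
    kron (1 : Matrix σ σ ℂ) X * (∑ i, kron (h i) (Qv i)) * kron 1 Y
      = ∑ i, kron (h i) (X * Qv i * Y) := by
  rw [Finset.mul_sum, Finset.sum_mul]
  exact Finset.sum_congr rfl fun i _ => by
    rw [kron_mul, kron_mul, one_mul, mul_one]

lemma kron_left_mul_sum (h : Fin N → Matrix σ σ ℂ) (Qv : Fin N → Matrix (Anc T) (Anc T) ℂ)
    (X : Matrix (Anc T) (Anc T) ℂ) :
    kron (1 : Matrix σ σ ℂ) X * (∑ i, kron (h i) (Qv i))
      = ∑ i, kron (h i) (X * Qv i) := by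
  rw [Finset.mul_sum]
  exact Finset.sum_congr rfl fun i _ => by rw [kron_mul, one_mul]

/-- diagonal multiplication of sums of kron products -/
lemma sum_kron_mul_diag (h : Fin N → Matrix σ σ ℂ)
    (hij : ∀ i j, i ≠ j → h i * h j = 0)
    (A B : Fin N → Matrix (Anc T) (Anc T) ℂ) (m : ℕ) :
    (∑ i, kron (h i ^ (m + 1)) (A i)) * (∑ i, kron (h i) (B i))
      = ∑ i, kron (h i ^ (m + 2)) (A i * B i) := by
  rw [Finset.sum_mul_sum]
  refine Finset.sum_congr rfl fun i _ => ?_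
  rw [Finset.sum_eq_single i]
  · rw [kron_mul, ← pow_succ]
  · intro j _ hji
    rw [kron_mul, pow_succ, Matrix.mul_assoc, hij i j (fun hh => hji (hh ▸ rfl)),
      Matrix.mul_zero, kron_zero]
  · intro hi
    exact absurd (Finset.mem_univ _) hi

lemma sum_kron_pow (h : Fin N → Matrix σ σ ℂ)
    (hij : ∀ i j, i ≠ j → h i * h j = 0)
    (B Cv : Fin N → Matrix (Anc T) (Anc T) ℂ) (n : ℕ) :
    (∑ i, kron (h i) (B i)) * (∑ i, kron (h i) (Cv i)) ^ n
      = ∑ i, kron (h i ^ (n + 1)) (B i * Cv i ^ n) := by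
  induction n with
  | zero => simp [pow_one]
  | succ n ih =>
      rw [pow_succ, ← Matrix.mul_assoc, ih]
      have := sum_kron_mul_diag h hij (fun i => B i * Cv i ^ n) Cv n
      rw [this]
      refine Finset.sum_congr rfl fun i _ => ?_
      rw [Matrix.mul_assoc, ← pow_succ]

end Stmt14Aux
namespace Stmt14Aux

open Matrix Finset

set_option linter.unusedSectionVars false

variable {σ : Type*} [Fintype σ] [DecidableEq σ]
variable {N : ℕ} {T : Fin N → ℕ} [∀ k, NeZero (T k)]

lemma cross_zero (h : Fin N → Matrix σ σ ℂ) (Tidx : ∀ k : Fin N, Fin (T k)) (i j : Fin N)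
    (hc : kron (h i) (Qproj Tidx i) * kron (h j) (Qproj Tidx j) = 0) :
    h i * h j = 0 := by
  rw [kron_mul] at hc
  have hQ : (Qproj Tidx i * Qproj Tidx j) Tidx Tidx = 1 := by
    rw [Matrix.mul_apply, Finset.sum_eq_single (Tidx : Anc T)]
    · simp [Qproj]
    · intro a _ ha
      have h0 : Qproj Tidx i Tidx a = 0 := by
        simp only [Qproj, Matrix.of_apply]
        rw [if_neg]
        rintro ⟨-, h2, h3⟩
        exact ha (funext fun k => by
          by_cases hk : k = i
          · subst hk; exact h2
          · exact (h3 k hk).symm)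
      rw [h0, zero_mul]
    · intro hT
      exact absurd (Finset.mem_univ _) hT
  ext x y
  have h1 := congrFun (congrFun hc (x, Tidx)) (y, Tidx)
  simp only [kron, Matrix.of_apply, Matrix.zero_apply] at h1 ⊢
  rw [hQ, mul_one] at h1
  exact h1

lemma real_sq (c : ℂ) (hc : c.im = 0) : ((‖c‖ ^ 2 : ℝ) : ℂ) = c ^ 2 := by
  have h1 : (starRingEnd ℂ) c = c := Complex.conj_eq_iff_im.mpr hc
  calc ((‖c‖ ^ 2 : ℝ) : ℂ) = ((Complex.normSq c : ℝ) : ℂ) := by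
        rw [Complex.sq_norm]
    _ = c * (starRingEnd ℂ) c := (Complex.mul_conj c).symm
    _ = c ^ 2 := by rw [h1, sq]

lemma re_cast (c : ℂ) (hc : c.im = 0) : ((c.re : ℝ) : ℂ) = c := by
  apply Complex.ext <;> simp [hc]

lemma etaP_eq_eta (Ψ : ∀ k : Fin N, Fin (T k) → Fin (T k) → ℂ)
    (μ : ∀ k : Fin N, Fin (T k) → ℝ) (C : ℝ) (z : ℂ)
    (Tidx : ∀ k : Fin N, Fin (T k)) (i : Fin N)
    (hreal : ∀ i k t, (Ψ i k t).im = 0) :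
    etaP Ψ μ C z Tidx i = eta Ψ μ C z Tidx i := by
  refine Finset.sum_congr rfl fun k _ => ?_
  rw [real_sq _ (hreal i k (Tidx i))]

end Stmt14Aux

open Stmt14Aux

/-- Order-`n` term of the self-energy series when tiling kills all cross terms:
`V₋₊ (G₊V₊)^n G₊ V₊₋ = ∑_i p_{0,i}² η_i^{n+1} · h_i^{n+2} ⊗ Π₋`. -/
theorem stmt14 {σ : Type*} [Fintype σ] [DecidableEq σ]
    {N : ℕ} {T : Fin N → ℕ} [∀ k, NeZero (T k)]
    (h : Fin N → Matrix σ σ ℂ) (hherm : ∀ i, (h i).IsHermitian)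
    (Tidx : ∀ k : Fin N, Fin (T k))
    (Ψ : ∀ k : Fin N, Fin (T k) → Fin (T k) → ℂ)
    (μ : ∀ k : Fin N, Fin (T k) → ℝ) (C : ℝ) (z : ℂ)
    (horth : ∀ i k l, star (Ψ i k) ⬝ᵥ Ψ i l = if k = l then (1 : ℂ) else 0)
    (hreal : ∀ i k t, (Ψ i k t).im = 0)
    (hground : ∀ i, μ i 0 = 0)
    (hexc : ∀ i k, k ≠ 0 → 0 < μ i k)
    (hres : ∀ (f : Anc T), f ≠ (fun k => 0) → z - (C : ℂ) * ∑ k, (μ k (f k) : ℂ) ≠ 0)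
    (hcross : ∀ i j, i ≠ j →
      kron (h i) (Qproj Tidx i) * kron (h j) (Qproj Tidx j) = 0) :
    ∀ n : ℕ,
      let V : Matrix (σ × Anc T) (σ × Anc T) ℂ := ∑ i, kron (h i) (Qproj Tidx i)
      let Pm := Pminus (T := T) Ψ
      let Pp : Matrix (Anc T) (Anc T) ℂ := 1 - Pm
      let Gf := kron (1 : Matrix σ σ ℂ) (Gplus Ψ μ C z)
      let Vmp := kron 1 Pm * V * kron 1 Pp
      let Vp := kron 1 Pp * V * kron 1 Pp
      let Vpm := kron 1 Pp * V * kron 1 Pm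
      Vmp * (Gf * Vp) ^ n * (Gf * Vpm) =
        ∑ i, ((((Ψ i 0 (Tidx i)).re : ℂ)) ^ 2 * (eta Ψ μ C z Tidx i) ^ (n + 1)) •
          kron ((h i) ^ (n + 2)) Pm := by
  intro n
  show (kron 1 (Pminus Ψ) * (∑ i, kron (h i) (Qproj Tidx i)) * kron 1 (1 - Pminus Ψ)) *
      (kron 1 (Gplus Ψ μ C z) *
        (kron 1 (1 - Pminus Ψ) * (∑ i, kron (h i) (Qproj Tidx i)) *
          kron 1 (1 - Pminus Ψ))) ^ n *
      (kron 1 (Gplus Ψ μ C z) *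
        (kron 1 (1 - Pminus Ψ) * (∑ i, kron (h i) (Qproj Tidx i)) * kron 1 (Pminus Ψ)))
    = ∑ i, ((((Ψ i 0 (Tidx i)).re : ℂ)) ^ 2 * (eta Ψ μ C z Tidx i) ^ (n + 1)) •
        kron ((h i) ^ (n + 2)) (Pminus Ψ)
  have hij : ∀ i j, i ≠ j → h i * h j = 0 := fun i j hne =>
    cross_zero h Tidx i j (hcross i j hne)
  rw [kron_sandwich h (fun i => Qproj Tidx i) (Pminus Ψ) (1 - Pminus Ψ),
    kron_sandwich h (fun i => Qproj Tidx i) (1 - Pminus Ψ) (1 - Pminus Ψ),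
    kron_sandwich h (fun i => Qproj Tidx i) (1 - Pminus Ψ) (Pminus Ψ),
    kron_left_mul_sum h _ (Gplus Ψ μ C z), kron_left_mul_sum h _ (Gplus Ψ μ C z),
    sum_kron_pow h hij _ _ n, sum_kron_mul_diag h hij _ _ n]
  refine Finset.sum_congr rfl fun i _ => ?_
  rw [core Ψ μ C z Tidx i horth hreal hground n, kron_smul_right]
  rw [etaP_eq_eta Ψ μ C z Tidx i hreal, re_cast _ (hreal i 0 (Tidx i))]
end
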